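/- If the cost function c over the alphabet 𝒳 is non-negative and symmetric, then the generalized tree edit distance d_c is symmetric: for all trees x̄, ȳ over 𝒳, d_c(x̄, ȳ) = d_c(ȳ, x̄). -/
import Mathlib


namespace TED

/-- A tree over an alphabet `α`: a label together with a (possibly empty) list of children. -/
inductive PTree (α : Type) where
  | node : α → List (PTree α) → PTree α

/-- A forest over `α` is a finite list of trees; `[]` is the empty forest `ε`. -/
abbrev Forest (α : Type) := List (PTree α)

namespace PTree

/-- The label of (the root of) a tree. -/
def label {α : Type} : PTree α → α
  | node a _ => a

/-- The children of (the root of) a tree. -/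
def children {α : Type} : PTree α → List (PTree α)
  | node _ cs => cs

mutual
  /-- The number of nodes of a tree. -/
  def size {α : Type} : PTree α → ℕ
    | node _ cs => 1 + sizeL cs
  /-- The number of nodes of a forest. -/
  def sizeL {α : Type} : List (PTree α) → ℕ
    | [] => 0
    | t :: ts => size t + sizeL ts
end

mutual
  /-- The pre-order list of all subtrees of a tree. -/
  def subtreesT {α : Type} : PTree α → List (PTree α)
    | node a cs => node a cs :: subtreesL cs
  /-- The pre-order list of all subtrees of a forest. -/
  def subtreesL {α : Type} : List (PTree α) → List (PTree α)
    | [] => []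
    | t :: ts => subtreesT t ++ subtreesL ts
end

end PTree

open PTree

/-- The pre-order `π(X)` of a forest: the list of all its subtrees. -/
def preorder {α : Type} (F : Forest α) : List (PTree α) := PTree.subtreesL F

/-- The size `|X|` of a forest: the length of its pre-order. -/
def fsize {α : Type} (F : Forest α) : ℕ := (preorder F).length

/-- The `i`-th subtree `x̄_i` (1-indexed pre-order) of a forest, if it exists. -/
def treeAt {α : Type} (F : Forest α) (i : ℕ) : Option (PTree α) := (preorder F)[i - 1]?

/-- The label `x_i` of the `i`-th subtree, as an element of `𝒳 ∪ {−}`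
(`none` plays the role of the gap symbol `−`). -/
def labelAt {α : Type} (F : Forest α) (i : ℕ) : Option α := (treeAt F i).map PTree.label

/-- The number of nodes of the `i`-th subtree `x̄_i`. -/
def sizeAt {α : Type} (F : Forest α) (i : ℕ) : ℕ := ((treeAt F i).map PTree.size).getD 0

/-- A cost function over `α`: a real-valued function on `(𝒳 ∪ {−}) × (𝒳 ∪ {−})`,
where the gap symbol `−` is modelled by `none`. -/
abbrev Cost (α : Type) := Option α → Option α → ℝ

/-- `c` is non-negative. -/
def Nonneg {α : Type} (c : Cost α) : Prop := ∀ x y, 0 ≤ c x y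
/-- `c` is self-equal. -/
def SelfEq {α : Type} (c : Cost α) : Prop := ∀ x, c x x = 0
/-- `c` is discernible. -/
def Discernible {α : Type} (c : Cost α) : Prop := ∀ x y, x ≠ y → 0 < c x y
/-- `c` is symmetric. -/
def Symm {α : Type} (c : Cost α) : Prop := ∀ x y, c x y = c y x
/-- `c` conforms to the triangular inequality. -/
def Triangle {α : Type} (c : Cost α) : Prop := ∀ x y z, c x z ≤ c x y + c y z

/-- Deletion of the first root: its children are spliced into its place. -/
def delRoot {α : Type} : Forest α → Forest α
  | [] => []
  | PTree.node _ cs :: ts => cs ++ ts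

/-- Replacement of the label of the first root by `y`. -/
def repRoot {α : Type} (y : α) : Forest α → Forest α
  | [] => []
  | PTree.node _ cs :: ts => PTree.node y cs :: ts

/-- Insertion of a new root labeled `y` at root level, adopting the trees
`l` to `r-1` of the forest as its children. -/
def insRoot {α : Type} (y : α) (l r : ℕ) (F : Forest α) : Forest α :=
  if r > F.length + 1 ∨ l > r ∨ l < 1 then F
  else if l = r then F.take (l - 1) ++ [PTree.node y []] ++ F.drop (l - 1)
  else F.take (l - 1) ++ [PTree.node y ((F.drop (l - 1)).take (r - l))] ++ F.drop (r - 1)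

/-- `del_i`: deletion of the node with pre-order index `i`. -/
def applyDel {α : Type} : ℕ → Forest α → Forest α
  | _, [] => []
  | i, PTree.node a cs :: ts =>
    if i < 1 then PTree.node a cs :: ts
    else if i = 1 then delRoot (PTree.node a cs :: ts)
    else if i ≤ size (PTree.node a cs) then PTree.node a (applyDel (i - 1) cs) :: ts
    else PTree.node a cs :: applyDel (i - size (PTree.node a cs)) ts
  termination_by _ F => sizeOf F

/-- `rep_{i,y}`: replacement of the label of the node with pre-order index `i` by `y`. -/
def applyRep {α : Type} (y : α) : ℕ → Forest α → Forest α
  | _, [] => []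
  | i, PTree.node a cs :: ts =>
    if i < 1 then PTree.node a cs :: ts
    else if i = 1 then repRoot y (PTree.node a cs :: ts)
    else if i ≤ size (PTree.node a cs) then PTree.node a (applyRep y (i - 1) cs) :: ts
    else PTree.node a cs :: applyRep y (i - size (PTree.node a cs)) ts
  termination_by _ F => sizeOf F

/-- `ins_{i,y,l,r}`: insertion of a node labeled `y` as a child of the node with
pre-order index `i` (at root level if `i = 0`), adopting that node's children
`l` through `r-1` as its children. -/
def applyIns {α : Type} (y : α) (l r : ℕ) : ℕ → Forest α → Forest α
  | 0, F => insRoot y l r F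
  | _ + 1, [] => []
  | i + 1, PTree.node a cs :: ts =>
    if i + 1 ≤ size (PTree.node a cs) then PTree.node a (applyIns y l r i cs) :: ts
    else PTree.node a cs :: applyIns y l r (i + 1 - size (PTree.node a cs)) ts
  termination_by _ F => sizeOf F

/-- The standard edits: deletions `del_i`, replacements `rep_{i,y}` and
insertions `ins_{i,y,l,r}`. -/
inductive Edit (α : Type) where
  | del (i : ℕ)
  | rep (i : ℕ) (y : α)
  | ins (i : ℕ) (y : α) (l r : ℕ)

/-- Application of a single edit to a forest. -/
def Edit.apply {α : Type} : Edit α → Forest α → Forest α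
  | .del i, F => applyDel i F
  | .rep i y, F => applyRep y i F
  | .ins i y l r, F => applyIns y l r i F

/-- Application of an edit script `δ̄ = δ₁,…,δ_T` to a forest (left to right). -/
def applyScript {α : Type} (δ : List (Edit α)) (F : Forest α) : Forest α :=
  δ.foldl (fun F e => e.apply F) F

open Classical in
/-- The cost of a single edit with respect to the forest it is applied to:
`0` if the edit leaves the forest unchanged, and otherwise `c(x_i, y)` for a
replacement, `c(x_i, −)` for a deletion and `c(−, y)` for an insertion. -/
noncomputable def editCost {α : Type} (c : Cost α) (e : Edit α) (F : Forest α) : ℝ :=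
  if e.apply F = F then 0
  else
    match e with
    | .del i => c (labelAt F i) none
    | .rep i y => c (labelAt F i) (some y)
    | .ins _ y _ _ => c none (some y)

/-- The cost `c(δ̄, X)` of an edit script: the sum of the costs of its edits,
each evaluated on the forest to which it is applied. -/
noncomputable def scriptCost {α : Type} (c : Cost α) : List (Edit α) → Forest α → ℝ
  | [], _ => 0
  | e :: es, F => editCost c e F + scriptCost c es (e.apply F)

/-- The (subforest) edit distance `D_c(F, G)`: the infimum of the costs of edit
scripts transforming `F` into `G`. -/
noncomputable def fdist {α : Type} (c : Cost α) (F G : Forest α) : ℝ :=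
  sInf { r : ℝ | ∃ δ : List (Edit α), applyScript δ F = G ∧ scriptCost c δ F = r }

/-- The generalized tree edit distance `d_c(x̄, ȳ)` between two trees. -/
noncomputable def ted {α : Type} (c : Cost α) (x y : PTree α) : ℝ := fdist c [x] [y]

/- ===== Auxiliary lemmas for the proof of `ted_symm` ===== -/

section Aux

variable {α : Type}

lemma size_pos (t : PTree α) : 1 ≤ size t := by
  cases t with
  | node a cs => rw [size]; omega

lemma sizeL_cons (t : PTree α) (ts : List (PTree α)) :
    sizeL (t :: ts) = size t + sizeL ts := by rw [sizeL]

lemma sizeL_append (A B : List (PTree α)) :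
    sizeL (A ++ B) = sizeL A + sizeL B := by
  induction A with
  | nil => simp [sizeL]
  | cons t ts ih => simp [sizeL_cons, ih]; omega

lemma subtreesL_cons (t : PTree α) (ts : List (PTree α)) :
    subtreesL (t :: ts) = subtreesT t ++ subtreesL ts := by rw [subtreesL]

lemma subtreesL_append (A B : List (PTree α)) :
    subtreesL (A ++ B) = subtreesL A ++ subtreesL B := by
  induction A with
  | nil => simp [subtreesL]
  | cons t ts ih => simp [subtreesL_cons, ih]

theorem length_subtreesL (F : List (PTree α)) :
    (subtreesL F).length = sizeL F := by
  match F with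
  | [] => rw [subtreesL, sizeL]; rfl
  | PTree.node a cs :: ts =>
    rw [subtreesL_cons, subtreesT, sizeL_cons, size]
    simp only [List.length_append, List.length_cons, length_subtreesL cs, length_subtreesL ts]
    omega
termination_by sizeL F
decreasing_by
  all_goals (simp only [sizeL_cons, size]; omega)

lemma preorder_cons (b : α) (cs ts : List (PTree α)) :
    preorder (PTree.node b cs :: ts) = PTree.node b cs :: (subtreesL cs ++ subtreesL ts) := by
  rw [preorder, subtreesL_cons, subtreesT]; rfl

lemma labelAt_cons_one (b : α) (cs ts : List (PTree α)) :
    labelAt (PTree.node b cs :: ts) 1 = some b := by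
  simp [labelAt, treeAt, preorder_cons, PTree.label]

lemma treeAt_cons_left {i : ℕ} (b : α) (cs ts : List (PTree α))
    (h2 : 2 ≤ i) (hle : i ≤ 1 + sizeL cs) :
    treeAt (PTree.node b cs :: ts) i = treeAt cs (i - 1) := by
  obtain ⟨k, rfl⟩ : ∃ k, i = k + 2 := ⟨i - 2, by omega⟩
  rw [treeAt, treeAt, preorder_cons]
  have hk : k + 2 - 1 = k + 1 := by omega
  rw [hk, List.getElem?_cons_succ]
  rw [List.getElem?_append_left (by rw [length_subtreesL]; omega)]
  rfl

lemma treeAt_cons_right {i : ℕ} (b : α) (cs ts : List (PTree α))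
    (h : 1 + sizeL cs < i) :
    treeAt (PTree.node b cs :: ts) i = treeAt ts (i - (1 + sizeL cs)) := by
  obtain ⟨k, rfl⟩ : ∃ k, i = sizeL cs + 2 + k := ⟨i - (sizeL cs + 2), by omega⟩
  rw [treeAt, treeAt, preorder_cons]
  have hk : sizeL cs + 2 + k - 1 = (sizeL cs + k) + 1 := by omega
  rw [hk, List.getElem?_cons_succ]
  rw [List.getElem?_append_right (by rw [length_subtreesL]; omega)]
  rw [length_subtreesL]
  congr 1
  omega

lemma treeAt_append_cons (A : Forest α) (t : PTree α) (B : Forest α) :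
    treeAt (A ++ t :: B) (sizeL A + 1) = some t := by
  rw [treeAt, preorder, subtreesL_append]
  simp only [Nat.add_sub_cancel]
  rw [List.getElem?_append_right (by rw [length_subtreesL])]
  rw [length_subtreesL, Nat.sub_self, subtreesL_cons]
  cases t with
  | node y C => rw [subtreesT]; simp

end Aux

section Aux2

variable {α : Type}

lemma delRoot_cons (y : α) (C B : List (PTree α)) :
    delRoot (PTree.node y C :: B) = C ++ B := by rw [delRoot]

lemma applyDel_append (A : Forest α) (t : PTree α) (B : Forest α) :
    applyDel (sizeL A + 1) (A ++ t :: B) = A ++ delRoot (t :: B) := by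
  induction A with
  | nil =>
    cases t with
    | node y C =>
      show applyDel (sizeL ([] : Forest α) + 1) (PTree.node y C :: B) = _
      rw [sizeL]
      rw [applyDel]
      simp
  | cons u A' ih =>
    cases u with
    | node u1 u2 =>
      have hp : 1 ≤ size (PTree.node u1 u2) := size_pos _
      rw [List.cons_append, applyDel, sizeL_cons]
      rw [if_neg (by omega), if_neg (by omega), if_neg (by omega)]
      have harith : size (PTree.node u1 u2) + sizeL A' + 1 - size (PTree.node u1 u2)
          = sizeL A' + 1 := by omega
      rw [harith, ih]
      rfl

lemma insRoot_cons (y : α) (l r : ℕ) (t : PTree α) (G : Forest α)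
    (h1 : 1 ≤ l) (h2 : l ≤ r) (h3 : r ≤ G.length + 1) :
    insRoot y (l + 1) (r + 1) (t :: G) = t :: insRoot y l r G := by
  obtain ⟨m, rfl⟩ : ∃ m, l = m + 1 := ⟨l - 1, by omega⟩
  have hA : ¬(r + 1 > (t :: G).length + 1 ∨ m + 1 + 1 > r + 1 ∨ m + 1 + 1 < 1) := by
    simp only [List.length_cons]; omega
  have hB : ¬(r > G.length + 1 ∨ m + 1 > r ∨ m + 1 < 1) := by omega
  rw [insRoot, if_neg hA, insRoot, if_neg hB]
  by_cases he : m + 1 = r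
  · rw [if_pos (by omega : m + 1 + 1 = r + 1), if_pos he]
    subst he
    have e3 : m + 1 + 1 - 1 = m + 1 := by omega
    have e4 : m + 1 - 1 = m := by omega
    rw [e3, e4, List.take_succ_cons, List.drop_succ_cons]
    rfl
  · rw [if_neg (by omega : ¬(m + 1 + 1 = r + 1)), if_neg he]
    have e1 : r + 1 - (m + 1 + 1) = r - (m + 1) := by omega
    have e2 : r + 1 - 1 = (r - 1) + 1 := by omega
    have e3 : m + 1 + 1 - 1 = m + 1 := by omega
    have e4 : m + 1 - 1 = m := by omega
    rw [e1, e2, e3, e4, List.take_succ_cons, List.drop_succ_cons, List.drop_succ_cons]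
    rfl

lemma sizeL_applyRep (y : α) (i : ℕ) (F : Forest α) :
    sizeL (applyRep y i F) = sizeL F := by
  match F with
  | [] => rw [applyRep]
  | PTree.node b cs :: ts =>
    rw [applyRep]
    by_cases h1 : i < 1
    · rw [if_pos h1]
    · rw [if_neg h1]
      by_cases h2 : i = 1
      · rw [if_pos h2, repRoot, sizeL_cons, sizeL_cons, size, size]
      · rw [if_neg h2]
        by_cases h3 : i ≤ size (PTree.node b cs)
        · rw [if_pos h3, sizeL_cons, sizeL_cons, size, size,
            sizeL_applyRep y (i-1) cs]
        · rw [if_neg h3, sizeL_cons, sizeL_cons, sizeL_applyRep]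
termination_by sizeL F
decreasing_by
  all_goals (simp only [sizeL_cons, size]; omega)

end Aux2

section Aux3

variable {α : Type}

lemma labelAt_cons_left {i : ℕ} (b : α) (cs ts : List (PTree α))
    (h2 : 2 ≤ i) (hle : i ≤ 1 + sizeL cs) :
    labelAt (PTree.node b cs :: ts) i = labelAt cs (i - 1) := by
  rw [labelAt, treeAt_cons_left b cs ts h2 hle, labelAt]

lemma labelAt_cons_right {i : ℕ} (b : α) (cs ts : List (PTree α))
    (h : 1 + sizeL cs < i) :
    labelAt (PTree.node b cs :: ts) i = labelAt ts (i - (1 + sizeL cs)) := by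
  rw [labelAt, treeAt_cons_right b cs ts h, labelAt]

lemma labelAt_append_cons (A : Forest α) (t : PTree α) (B : Forest α) :
    labelAt (A ++ t :: B) (sizeL A + 1) = some t.label := by
  rw [labelAt, treeAt_append_cons]; rfl

theorem rep_inv (y : α) (i : ℕ) (F : Forest α) (h : applyRep y i F ≠ F) :
    ∃ a, labelAt F i = some a ∧ labelAt (applyRep y i F) i = some y ∧
      applyRep a i (applyRep y i F) = F := by
  match F with
  | [] => rw [applyRep] at h; exact absurd rfl h
  | PTree.node b cs :: ts =>
    by_cases h1 : i < 1
    · rw [applyRep, if_pos h1] at h; exact absurd rfl h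
    · by_cases h2 : i = 1
      · subst h2
        have hG : applyRep y 1 (PTree.node b cs :: ts) = PTree.node y cs :: ts := by
          rw [applyRep, if_neg h1, if_pos rfl, repRoot]
        rw [hG]
        refine ⟨b, labelAt_cons_one b cs ts, labelAt_cons_one y cs ts, ?_⟩
        rw [applyRep, if_neg h1, if_pos rfl, repRoot]
      · by_cases h3 : i ≤ size (PTree.node b cs)
        · have hG : applyRep y i (PTree.node b cs :: ts)
              = PTree.node b (applyRep y (i - 1) cs) :: ts := by
            rw [applyRep, if_neg h1, if_neg h2, if_pos h3]
          rw [hG] at h ⊢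
          have h' : applyRep y (i - 1) cs ≠ cs := fun he => h (by rw [he])
          obtain ⟨a, ha1, ha2, ha3⟩ := rep_inv y (i - 1) cs h'
          have hsz : sizeL (applyRep y (i - 1) cs) = sizeL cs := sizeL_applyRep _ _ _
          rw [size] at h3
          have h2' : 2 ≤ i := by omega
          refine ⟨a, ?_, ?_, ?_⟩
          · rw [labelAt_cons_left b cs ts h2' (by omega)]; exact ha1
          · rw [labelAt_cons_left b _ ts h2' (by omega)]; exact ha2
          · rw [applyRep, if_neg h1, if_neg h2, if_pos (by rw [size]; omega), ha3]
        · have hG : applyRep y i (PTree.node b cs :: ts)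
              = PTree.node b cs :: applyRep y (i - size (PTree.node b cs)) ts := by
            rw [applyRep, if_neg h1, if_neg h2, if_neg h3]
          rw [hG] at h ⊢
          have h' : applyRep y (i - size (PTree.node b cs)) ts ≠ ts :=
            fun he => h (by rw [he])
          obtain ⟨a, ha1, ha2, ha3⟩ := rep_inv y _ ts h'
          rw [size] at h3
          have hlt : 1 + sizeL cs < i := by omega
          have hidx : i - (1 + sizeL cs) = i - size (PTree.node b cs) := by
            rw [size]
          refine ⟨a, ?_, ?_, ?_⟩
          · rw [labelAt_cons_right b cs ts hlt, hidx]; exact ha1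
          · rw [labelAt_cons_right b cs _ hlt, hidx]; exact ha2
          · rw [applyRep, if_neg h1, if_neg h2, if_neg (by rw [size]; omega), ha3]
termination_by sizeL F
decreasing_by
  all_goals (simp only [sizeL_cons, size]; omega)

end Aux3

section Aux4

variable {α : Type}

theorem del_inv (i : ℕ) (F : Forest α) (h : applyDel i F ≠ F) :
    ∃ a l r j, labelAt F i = some a ∧ 1 ≤ l ∧ l ≤ r ∧
      (j = 0 → r ≤ (applyDel i F).length + 1) ∧ j ≤ sizeL (applyDel i F) ∧
      applyIns a l r j (applyDel i F) = F := by
  match F with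
  | [] => rw [applyDel] at h; exact absurd rfl h
  | PTree.node b cs :: ts =>
    by_cases h1 : i < 1
    · rw [applyDel, if_pos h1] at h; exact absurd rfl h
    · by_cases h2 : i = 1
      · subst h2
        have hG : applyDel 1 (PTree.node b cs :: ts) = cs ++ ts := by
          rw [applyDel, if_neg h1, if_pos rfl, delRoot]
        rw [hG]
        refine ⟨b, 1, cs.length + 1, 0, labelAt_cons_one b cs ts, le_refl 1,
          by omega, ?_, by omega, ?_⟩
        · intro _; simp only [List.length_append]; omega
        · rw [applyIns]
          have hbad : ¬(cs.length + 1 > (cs ++ ts).length + 1 ∨ 1 > cs.length + 1 ∨ 1 < 1) := by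
            simp only [List.length_append]; omega
          rw [insRoot, if_neg hbad]
          by_cases hcs : (1 : ℕ) = cs.length + 1
          · rw [if_pos hcs]
            have : cs = [] := by
              cases cs with
              | nil => rfl
              | cons c cs' => simp at hcs
            subst this
            simp
          · rw [if_neg hcs]
            simp only [Nat.add_sub_cancel, Nat.sub_self, List.drop_zero, List.take_zero,
              List.nil_append]
            rw [List.take_left' rfl, List.drop_left' rfl]
            rfl
      · by_cases h3 : i ≤ size (PTree.node b cs)
        · have hG : applyDel i (PTree.node b cs :: ts)
              = PTree.node b (applyDel (i - 1) cs) :: ts := by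
            rw [applyDel, if_neg h1, if_neg h2, if_pos h3]
          rw [hG] at h ⊢
          have h' : applyDel (i - 1) cs ≠ cs := fun he => h (by rw [he])
          obtain ⟨a, l, r, j, ha, hl, hlr, hr0, hj, heq⟩ := del_inv (i - 1) cs h'
          rw [size] at h3
          have h2' : 2 ≤ i := by omega
          refine ⟨a, l, r, j + 1, ?_, hl, hlr, by omega, ?_, ?_⟩
          · rw [labelAt_cons_left b cs ts h2' (by omega)]; exact ha
          · rw [sizeL_cons, size]; omega
          · rw [applyIns, if_pos (by rw [size]; omega), heq]
        · have hG : applyDel i (PTree.node b cs :: ts)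
              = PTree.node b cs :: applyDel (i - size (PTree.node b cs)) ts := by
            rw [applyDel, if_neg h1, if_neg h2, if_neg h3]
          rw [hG] at h ⊢
          have h' : applyDel (i - size (PTree.node b cs)) ts ≠ ts :=
            fun he => h (by rw [he])
          obtain ⟨a, l, r, j, ha, hl, hlr, hr0, hj, heq⟩ := del_inv _ ts h'
          rw [size] at h3
          have hlt : 1 + sizeL cs < i := by omega
          have hidx : i - (1 + sizeL cs) = i - size (PTree.node b cs) := by rw [size]
          have hla : labelAt (PTree.node b cs :: ts) i = some a := by
            rw [labelAt_cons_right b cs ts hlt, hidx]; exact ha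
          rcases Nat.eq_zero_or_pos j with hj0 | hjpos
          · subst hj0
            refine ⟨a, l + 1, r + 1, 0, hla, by omega, by omega, ?_, by omega, ?_⟩
            · intro _
              simp only [List.length_cons]
              have := hr0 rfl
              omega
            · rw [applyIns, insRoot_cons a l r _ _ hl hlr (hr0 rfl)]
              rw [show insRoot a l r (applyDel (i - size (PTree.node b cs)) ts)
                  = applyIns a l r 0 (applyDel (i - size (PTree.node b cs)) ts) from
                  by rw [applyIns]]
              rw [heq]
          · have hspos : 1 ≤ size (PTree.node b cs) := size_pos _
            refine ⟨a, l, r, j + size (PTree.node b cs), hla, hl, hlr,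
              by intro hc; omega, ?_, ?_⟩
            · rw [sizeL_cons]; omega
            · obtain ⟨k, hk⟩ : ∃ k, j + size (PTree.node b cs) = k + 1 :=
                ⟨j + size (PTree.node b cs) - 1, by omega⟩
              rw [hk, applyIns, if_neg (by omega), show k + 1 - size (PTree.node b cs) = j by omega, heq]
termination_by sizeL F
decreasing_by
  all_goals (simp only [sizeL_cons, size]; omega)

end Aux4

section Aux5

variable {α : Type}

theorem ins_inv (y : α) (l r i : ℕ) (F : Forest α) (h : applyIns y l r i F ≠ F) :
    ∃ j, 1 ≤ j ∧ j ≤ sizeL (applyIns y l r i F) ∧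
      labelAt (applyIns y l r i F) j = some y ∧
      applyDel j (applyIns y l r i F) = F := by
  match i, F with
  | 0, F =>
    have hG : applyIns y l r 0 F = insRoot y l r F := by rw [applyIns]
    rw [hG] at h ⊢
    by_cases hbad : r > F.length + 1 ∨ l > r ∨ l < 1
    · rw [insRoot, if_pos hbad] at h; exact absurd rfl h
    · push_neg at hbad
      obtain ⟨hc3, hc2, hc1⟩ := hbad
      by_cases he : l = r
      · have hG2 : insRoot y l r F
            = F.take (l - 1) ++ (PTree.node y [] :: F.drop (l - 1)) := by
          rw [insRoot, if_neg (by omega), if_pos he]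
          simp
        rw [hG2]
        refine ⟨sizeL (F.take (l - 1)) + 1, by omega, ?_, ?_, ?_⟩
        · rw [sizeL_append, sizeL_cons, size, sizeL]; omega
        · rw [labelAt_append_cons]; rfl
        · rw [applyDel_append, delRoot_cons, List.nil_append, List.take_append_drop]
      · have hG2 : insRoot y l r F
            = F.take (l - 1) ++
              (PTree.node y ((F.drop (l - 1)).take (r - l)) :: F.drop (r - 1)) := by
          rw [insRoot, if_neg (by omega), if_neg he]
          simp
        rw [hG2]
        refine ⟨sizeL (F.take (l - 1)) + 1, by omega, ?_, ?_, ?_⟩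
        · rw [sizeL_append, sizeL_cons]
          have := size_pos (PTree.node y ((F.drop (l - 1)).take (r - l)))
          omega
        · rw [labelAt_append_cons]; rfl
        · rw [applyDel_append, delRoot_cons]
          have hdd : (F.drop (l - 1)).drop (r - l) = F.drop (r - 1) := by
            rw [List.drop_drop]
            congr 1
            omega
          rw [← hdd, List.take_append_drop, List.take_append_drop]
  | (i + 1), [] =>
    rw [applyIns] at h; exact absurd rfl h
  | (i + 1), PTree.node b cs :: ts =>
    by_cases hc : i + 1 ≤ size (PTree.node b cs)
    · have hG : applyIns y l r (i + 1) (PTree.node b cs :: ts)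
          = PTree.node b (applyIns y l r i cs) :: ts := by
        rw [applyIns, if_pos hc]
      rw [hG] at h ⊢
      have h' : applyIns y l r i cs ≠ cs := fun he => h (by rw [he])
      obtain ⟨j, hj1, hj2, hj3, hj4⟩ := ins_inv y l r i cs h'
      refine ⟨j + 1, by omega, ?_, ?_, ?_⟩
      · rw [sizeL_cons, size]; omega
      · rw [labelAt_cons_left b _ ts (by omega) (by omega), Nat.add_sub_cancel]
        exact hj3
      · rw [applyDel, if_neg (by omega), if_neg (by omega),
          if_pos (by rw [size]; omega), Nat.add_sub_cancel, hj4]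
    · have hG : applyIns y l r (i + 1) (PTree.node b cs :: ts)
          = PTree.node b cs :: applyIns y l r (i + 1 - size (PTree.node b cs)) ts := by
        rw [applyIns, if_neg hc]
      rw [hG] at h ⊢
      have h' : applyIns y l r (i + 1 - size (PTree.node b cs)) ts ≠ ts :=
        fun he => h (by rw [he])
      obtain ⟨j, hj1, hj2, hj3, hj4⟩ := ins_inv y l r _ ts h'
      have hspos : 1 ≤ size (PTree.node b cs) := size_pos _
      have hs : size (PTree.node b cs) = 1 + sizeL cs := by rw [size]
      refine ⟨j + size (PTree.node b cs), by omega, ?_, ?_, ?_⟩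
      · rw [sizeL_cons]; omega
      · rw [labelAt_cons_right b cs _ (by omega),
          show j + size (PTree.node b cs) - (1 + sizeL cs) = j by omega]
        exact hj3
      · rw [applyDel, if_neg (by omega), if_neg (by omega), if_neg (by omega),
          show j + size (PTree.node b cs) - size (PTree.node b cs) = j by omega, hj4]
termination_by sizeL F
decreasing_by
  all_goals (simp only [sizeL_cons, size]; omega)

end Aux5

section Final

variable {α : Type}

theorem edit_inv (c : Cost α) (hs : Symm c) (e : Edit α) (F : Forest α) :
    ∃ e' : Edit α, e'.apply (e.apply F) = F ∧
      editCost c e' (e.apply F) = editCost c e F := by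
  by_cases hid : e.apply F = F
  · exact ⟨e, by rw [hid, hid], by rw [hid]⟩
  · cases e with
    | del i =>
      have h : applyDel i F ≠ F := hid
      obtain ⟨a, l, r, j, ha, _, _, _, _, heq⟩ := del_inv i F h
      refine ⟨.ins j a l r, heq, ?_⟩
      have hne : (Edit.ins j a l r).apply (applyDel i F) ≠ applyDel i F := by
        show applyIns a l r j (applyDel i F) ≠ applyDel i F
        rw [heq]
        exact fun hcon => h hcon.symm
      show editCost c (Edit.ins j a l r) (applyDel i F) = _
      simp only [editCost]
      rw [if_neg hne, if_neg hid]
      rw [ha]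
      exact hs none (some a)
    | rep i y =>
      have h : applyRep y i F ≠ F := hid
      obtain ⟨a, ha1, ha2, ha3⟩ := rep_inv y i F h
      refine ⟨.rep i a, ha3, ?_⟩
      have hne : (Edit.rep i a).apply (applyRep y i F) ≠ applyRep y i F := by
        show applyRep a i (applyRep y i F) ≠ applyRep y i F
        rw [ha3]
        exact fun hcon => h hcon.symm
      show editCost c (Edit.rep i a) (applyRep y i F) = _
      simp only [editCost]
      rw [if_neg hne, if_neg hid]
      rw [ha1, ha2]
      exact hs (some y) (some a)
    | ins i y l r =>
      have h : applyIns y l r i F ≠ F := hid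
      obtain ⟨j, _, _, hj3, hj4⟩ := ins_inv y l r i F h
      refine ⟨.del j, hj4, ?_⟩
      have hne : (Edit.del j).apply (applyIns y l r i F) ≠ applyIns y l r i F := by
        show applyDel j (applyIns y l r i F) ≠ applyIns y l r i F
        rw [hj4]
        exact fun hcon => h hcon.symm
      show editCost c (Edit.del j) (applyIns y l r i F) = _
      simp only [editCost]
      rw [if_neg hne, if_neg hid]
      rw [hj3]
      exact hs (some y) none

lemma applyScript_cons (e : Edit α) (es : List (Edit α)) (F : Forest α) :
    applyScript (e :: es) F = applyScript es (e.apply F) := rfl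

lemma applyScript_append (d1 d2 : List (Edit α)) (F : Forest α) :
    applyScript (d1 ++ d2) F = applyScript d2 (applyScript d1 F) := by
  induction d1 generalizing F with
  | nil => rfl
  | cons e es ih => rw [List.cons_append, applyScript_cons, applyScript_cons, ih]

lemma scriptCost_append (c : Cost α) (d1 d2 : List (Edit α)) (F : Forest α) :
    scriptCost c (d1 ++ d2) F = scriptCost c d1 F + scriptCost c d2 (applyScript d1 F) := by
  induction d1 generalizing F with
  | nil => simp only [List.nil_append, scriptCost, zero_add]; rfl
  | cons e es ih =>
    rw [List.cons_append, scriptCost, scriptCost, ih, applyScript_cons, add_assoc]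

theorem script_inv (c : Cost α) (hs : Symm c) (δ : List (Edit α)) :
    ∀ F : Forest α, ∃ δ' : List (Edit α),
      applyScript δ' (applyScript δ F) = F ∧
      scriptCost c δ' (applyScript δ F) = scriptCost c δ F := by
  induction δ with
  | nil => exact fun F => ⟨[], rfl, rfl⟩
  | cons e es ih =>
    intro F
    obtain ⟨e', he1, he2⟩ := edit_inv c hs e F
    obtain ⟨δ', hd1, hd2⟩ := ih (e.apply F)
    refine ⟨δ' ++ [e'], ?_, ?_⟩
    · rw [applyScript_cons, applyScript_append, hd1]
      exact he1
    · rw [applyScript_cons, scriptCost_append, hd1, hd2]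
      have h1 : scriptCost c [e'] (e.apply F) = editCost c e' (e.apply F) + 0 := by
        rw [scriptCost, scriptCost]
      rw [h1, he2, scriptCost]
      ring

theorem fdist_symm (c : Cost α) (hs : Symm c) (F G : Forest α) :
    fdist c F G = fdist c G F := by
  unfold fdist
  congr 1
  ext t
  simp only [Set.mem_setOf_eq]
  constructor
  · rintro ⟨δ, h1, h2⟩
    obtain ⟨δ', hd1, hd2⟩ := script_inv c hs δ F
    rw [h1] at hd1 hd2
    exact ⟨δ', hd1, hd2.trans h2⟩
  · rintro ⟨δ, h1, h2⟩
    obtain ⟨δ', hd1, hd2⟩ := script_inv c hs δ G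
    rw [h1] at hd1 hd2
    exact ⟨δ', hd1, hd2.trans h2⟩

end Final

/-- If the cost function `c` is non-negative and symmetric, then the
generalized tree edit distance `d_c` is symmetric. -/
theorem ted_symm {α : Type} (c : Cost α) (hnn : Nonneg c) (hs : Symm c) :
    ∀ x y : PTree α, ted c x y = ted c y x := by
  intro x y
  exact fdist_symm c hs [x] [y]

end TED
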